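/- Let K ≥ 1 and n ≥ 1. For each arm j ∈ Fin K, let X_{j,1},…,X_{j,n} be independent {0,1}-valued (Bernoulli) random variables with mean μ j, all random variables across arms mutually independent, and let μ̂ j = (1/n) · Σᵢ X_{j,i}. Let a be any (random) arm maximizing μ̂. Then for every ε > 0, the probability that a is ε-optimal, i.e. that (max over j of μ j) − μ a ≤ ε, is at least 1 − 2·K·exp(−n·ε²/2). In particular, if each arm is pulled ⌊T/K⌋ = n times out of a total budget of T = n·K samples, the success probability is at least 1 − 2·K·exp(−T·ε²/(2K)). -/

import Mathlib

open MeasureTheory ProbabilityTheory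

/-- Positivity of the Bernoulli mgf denominator. -/
lemma bern_L_pos (p : ℝ) (h0 : 0 ≤ p) (h1 : p ≤ 1) (s : ℝ) :
    0 < 1 - p + p * Real.exp s := by
  rcases le_total (Real.exp s) 1 with h | h
  · nlinarith [Real.exp_pos s]
  · nlinarith [Real.exp_pos s]

/-- **Hoeffding's lemma for Bernoulli variables**: the centered mgf is at most
`exp (t^2/8)`. -/
lemma bernoulli_mgf_le (p : ℝ) (h0 : 0 ≤ p) (h1 : p ≤ 1) (t : ℝ) :
    (1 - p) * Real.exp (t * (0 - p)) + p * Real.exp (t * (1 - p)) ≤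
      Real.exp (t ^ 2 / 8) := by
  have hL := bern_L_pos p h0 h1
  let L : ℝ → ℝ := fun s => 1 - p + p * Real.exp s
  have hLs : ∀ s, L s = 1 - p + p * Real.exp s := fun _ => rfl
  -- F s = s*p + s^2/8 - log (L s) is nonneg
  set F : ℝ → ℝ := fun s => s * p + s ^ 2 / 8 - Real.log (L s) with hFdef
  set G : ℝ → ℝ := fun s => p + s / 4 - p * Real.exp s / L s with hGdef
  have hLd : ∀ s, HasDerivAt L (p * Real.exp s) s := fun s =>
    ((Real.hasDerivAt_exp s).const_mul p).const_add (1 - p)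
  have hFd : ∀ s, HasDerivAt F (G s) s := by
    intro s
    have h1' : HasDerivAt (fun s : ℝ => s * p) p s := by
      simpa using (hasDerivAt_id s).mul_const p
    have h2' : HasDerivAt (fun s : ℝ => s ^ 2 / 8) (s / 4) s := by
      have := (hasDerivAt_pow 2 s).div_const 8
      exact this.congr_deriv (by ring)
    have h3' : HasDerivAt (fun s => Real.log (L s)) (p * Real.exp s / L s) s :=
      (hLd s).log (hL s).ne'
    exact (h1'.add h2').sub h3'
  have hGd : ∀ s, HasDerivAt G
      (1 / 4 - (p * Real.exp s * L s - p * Real.exp s * (p * Real.exp s)) / L s ^ 2) s := by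
    intro s
    have hd : HasDerivAt (fun s => p * Real.exp s / L s)
        ((p * Real.exp s * L s - p * Real.exp s * (p * Real.exp s)) / L s ^ 2) s :=
      ((Real.hasDerivAt_exp s).const_mul p).div (hLd s) (hL s).ne'
    have hc : HasDerivAt (fun s : ℝ => p + s / 4) (1 / 4) s := by
      simpa using ((hasDerivAt_id s).div_const 4).const_add p
    exact hc.sub hd
  have hG'nonneg : ∀ s, 0 ≤ 1 / 4 -
      (p * Real.exp s * L s - p * Real.exp s * (p * Real.exp s)) / L s ^ 2 := by
    intro s
    have hL2 : 0 < L s ^ 2 := pow_pos (hL s) 2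
    rw [sub_nonneg, div_le_iff₀ hL2, hLs]
    nlinarith [sq_nonneg ((1 - p + p * Real.exp s) - 2 * (p * Real.exp s)), hL s]
  have hGmono : Monotone G :=
    monotone_of_deriv_nonneg (fun s => (hGd s).differentiableAt)
      (fun s => by rw [(hGd s).deriv]; exact hG'nonneg s)
  have hG0 : G 0 = 0 := by
    simp only [hGdef, hLs, Real.exp_zero, mul_one]
    have : 1 - p + p = 1 := by ring
    rw [this]
    ring
  have hF0 : F 0 = 0 := by
    simp [hFdef, hLs, Real.exp_zero]
  have hFcont : Continuous F := by
    have : Differentiable ℝ F := fun s => (hFd s).differentiableAt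
    exact this.continuous
  have hFnonneg : ∀ s, 0 ≤ F s := by
    intro s
    rcases le_total 0 s with hs | hs
    · have hmono : MonotoneOn F (Set.Ici 0) := by
        apply monotoneOn_of_deriv_nonneg (convex_Ici 0) hFcont.continuousOn
          (fun x _ => (hFd x).differentiableAt.differentiableWithinAt)
        intro x hx
        rw [(hFd x).deriv]
        have : (0:ℝ) ≤ x := le_of_lt (by simpa using hx)
        calc (0:ℝ) = G 0 := hG0.symm
          _ ≤ G x := hGmono this
      have := hmono (Set.self_mem_Ici) (Set.mem_Ici.2 hs) hs
      linarith [hF0 ▸ this]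
    · have hanti : AntitoneOn F (Set.Iic 0) := by
        apply antitoneOn_of_deriv_nonpos (convex_Iic 0) hFcont.continuousOn
          (fun x _ => (hFd x).differentiableAt.differentiableWithinAt)
        intro x hx
        rw [(hFd x).deriv]
        have hx0 : x ≤ 0 := le_of_lt (by simpa using hx)
        calc G x ≤ G 0 := hGmono hx0
          _ = 0 := hG0
      have := hanti (Set.mem_Iic.2 hs) Set.self_mem_Iic hs
      linarith [hF0 ▸ this]
  -- conclude
  have hlog : Real.log (L t) ≤ t * p + t ^ 2 / 8 := by
    have := hFnonneg t
    simp only [hFdef, hLs] at this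
    linarith
  have hLle : L t ≤ Real.exp (t * p + t ^ 2 / 8) := by
    calc L t = Real.exp (Real.log (L t)) := (Real.exp_log (hL t)).symm
      _ ≤ Real.exp (t * p + t ^ 2 / 8) := Real.exp_le_exp.2 hlog
  have key : (1 - p) * Real.exp (t * (0 - p)) + p * Real.exp (t * (1 - p)) =
      Real.exp (-(t * p)) * L t := by
    simp only [hLs]
    rw [show t * (1 - p) = -(t * p) + t by ring, Real.exp_add,
      show t * (0 - p) = -(t * p) by ring]
    ring
  rw [key]
  calc Real.exp (-(t * p)) * L t ≤ Real.exp (-(t * p)) * Real.exp (t * p + t ^ 2 / 8) := by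
        exact mul_le_mul_of_nonneg_left hLle (Real.exp_pos _).le
    _ = Real.exp (t ^ 2 / 8) := by rw [← Real.exp_add]; ring_nf

/-- Independence is preserved under injective reindexing. -/
lemma iIndepFun_precomp_inj {Ω ι κ β : Type*} {mΩ : MeasurableSpace Ω}
    {μ : Measure Ω} [mβ : MeasurableSpace β] {X : ι → Ω → β}
    (h : iIndepFun X μ) {f : κ → ι} (hf : Function.Injective f) :
    iIndepFun (fun k => X (f k)) μ := by
  classical
  rw [iIndepFun_iff_measure_inter_preimage_eq_mul] at h ⊢
  intro S sets H
  set g : ι → Set β := fun i =>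
    if hi : ∃ k, k ∈ S ∧ f k = i then sets hi.choose else Set.univ with hg
  have key : ∀ k ∈ S, g (f k) = sets k := by
    intro k hk
    have hex : ∃ k', k' ∈ S ∧ f k' = f k := ⟨k, hk, rfl⟩
    simp only [hg, dif_pos hex]
    exact congrArg sets (hf hex.choose_spec.2)
  have hSimg : ∀ i ∈ S.image f, MeasurableSet (g i) := by
    intro i hi
    rw [Finset.mem_image] at hi
    obtain ⟨k, hk, rfl⟩ := hi
    rw [key k hk]
    exact H k hk
  have := h (S.image f) hSimg
  rw [Finset.set_biInter_finset_image, Finset.prod_image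
    (fun k _ k' _ hkk' => hf hkk')] at this
  calc μ (⋂ k ∈ S, (fun ω => X (f k) ω) ⁻¹' sets k)
      = μ (⋂ k ∈ S, X (f k) ⁻¹' g (f k)) := by
        congr 1; exact Set.iInter₂_congr fun k hk => by rw [key k hk]
    _ = ∏ k ∈ S, μ (X (f k) ⁻¹' g (f k)) := this
    _ = ∏ k ∈ S, μ ((fun ω => X (f k) ω) ⁻¹' sets k) :=
        Finset.prod_congr rfl fun k hk => by rw [key k hk]

/-- Per-arm two-sided Hoeffding tail bound for the empirical mean of `n`
independent Bernoulli samples. -/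
lemma arm_tail_bound {Ω : Type*} [MeasureSpace Ω] [IsProbabilityMeasure (ℙ : Measure Ω)]
    (n : ℕ) (hn : 1 ≤ n) (Y : Fin n → Ω → ℝ) (p : ℝ)
    (hmeas : ∀ i, Measurable (Y i))
    (hindep : iIndepFun Y ℙ)
    (hval : ∀ i ω, Y i ω = 0 ∨ Y i ω = 1)
    (hmean : ∀ i, ∫ ω, Y i ω ∂ℙ = p)
    (ε : ℝ) (hε : 0 < ε) :
    ℙ {ω | ¬ |(1 / (n : ℝ)) * ∑ i, Y i ω - p| ≤ ε / 2} ≤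
      ENNReal.ofReal (2 * Real.exp (-(n : ℝ) * ε ^ 2 / 2)) := by
  have hn0 : (0 : ℝ) < n := by exact_mod_cast hn
  -- p ∈ [0, 1]
  have hYint : ∀ i, Integrable (Y i) ℙ := by
    intro i
    refine (integrable_const (1 : ℝ)).mono' (hmeas i).aestronglyMeasurable ?_
    refine Filter.Eventually.of_forall fun ω => ?_
    rcases hval i ω with h | h <;> simp [h]
  have hp0 : 0 ≤ p := by
    rw [← hmean ⟨0, hn⟩]
    apply integral_nonneg
    intro ω; rcases hval ⟨0, hn⟩ ω with h | h <;> simp [h]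
  have hp1 : p ≤ 1 := by
    rw [← hmean ⟨0, hn⟩]
    calc ∫ ω, Y ⟨0, hn⟩ ω ∂ℙ ≤ ∫ _, (1 : ℝ) ∂ℙ := by
          apply integral_mono (hYint _) (integrable_const 1)
          intro ω; rcases hval ⟨0, hn⟩ ω with h | h <;> simp [h]
      _ = 1 := by simp
  -- centered variables
  set Z : Fin n → Ω → ℝ := fun i => (fun x => x - p) ∘ Y i with hZdef
  have hZmeas : ∀ i, Measurable (Z i) := fun i => (hmeas i).sub_const p
  have hZindep : iIndepFun Z ℙ :=
    hindep.comp (fun _ x => x - p) (fun _ => measurable_id.sub_const p)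
  have hZval : ∀ i ω, Z i ω = 0 - p ∨ Z i ω = 1 - p := by
    intro i ω
    rcases hval i ω with h | h
    · left; simp [hZdef, h]
    · right; simp [hZdef, h]
  -- integrability of exponentials
  have hint : ∀ (t : ℝ) (i : Fin n),
      Integrable (fun ω => Real.exp (t * Z i ω)) ℙ := by
    intro t i
    refine (integrable_const (Real.exp |t|)).mono'
      (((hZmeas i).const_mul t).exp).aestronglyMeasurable ?_
    refine Filter.Eventually.of_forall fun ω => ?_
    rw [Real.norm_eq_abs, abs_of_pos (Real.exp_pos _), Real.exp_le_exp]
    have hZ1 : |Z i ω| ≤ 1 := by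
      rcases hZval i ω with h | h <;> rw [h, abs_le] <;> constructor <;> linarith
    calc t * Z i ω ≤ |t * Z i ω| := le_abs_self _
      _ = |t| * |Z i ω| := abs_mul _ _
      _ ≤ |t| * 1 := mul_le_mul_of_nonneg_left hZ1 (abs_nonneg t)
      _ = |t| := mul_one _
  -- mgf bound for each centered variable
  have hmgf : ∀ (t : ℝ) (i : Fin n), mgf (Z i) ℙ t ≤ Real.exp (t ^ 2 / 8) := by
    intro t i
    have hpt : ∀ ω, Real.exp (t * Z i ω) =
        Real.exp (t * (0 - p)) + Y i ω * (Real.exp (t * (1 - p)) - Real.exp (t * (0 - p))) := by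
      intro ω
      rcases hval i ω with h | h <;> simp [hZdef, h]
    have : mgf (Z i) ℙ t =
        (1 - p) * Real.exp (t * (0 - p)) + p * Real.exp (t * (1 - p)) := by
      rw [mgf]
      rw [integral_congr_ae (Filter.Eventually.of_forall hpt)]
      rw [integral_add (integrable_const _) ((hYint i).mul_const _),
        integral_mul_const, hmean i]
      simp only [integral_const, measure_univ, probReal_univ, ENNReal.toReal_one, smul_eq_mul, one_mul]
      ring
    rw [this]
    exact bernoulli_mgf_le p hp0 hp1 t
  -- Chernoff for the sum
  set W : Ω → ℝ := ∑ i, Z i with hWdef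
  have hWint : ∀ t : ℝ, Integrable (fun ω => Real.exp (t * W ω)) ℙ := fun t =>
    hZindep.integrable_exp_mul_sum hZmeas (fun i _ => hint t i)
  have hWmgf : ∀ t : ℝ, mgf W ℙ t ≤ Real.exp ((n : ℝ) * t ^ 2 / 8) := by
    intro t
    rw [hWdef, hZindep.mgf_sum hZmeas Finset.univ]
    calc ∏ i : Fin n, mgf (Z i) ℙ t ≤ ∏ _i : Fin n, Real.exp (t ^ 2 / 8) :=
          Finset.prod_le_prod (fun i _ => mgf_nonneg) (fun i _ => hmgf t i)
      _ = Real.exp (t ^ 2 / 8) ^ n := by simp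
      _ = Real.exp ((n : ℝ) * t ^ 2 / 8) := by
          rw [← Real.exp_nat_mul]; ring_nf
  have hexp_bound : ∀ t : ℝ, Real.exp (-t * ((n : ℝ) * ε / 2)) *
      Real.exp ((n : ℝ) * t ^ 2 / 8) = Real.exp (-t * ((n : ℝ) * ε / 2) + (n : ℝ) * t ^ 2 / 8) :=
    fun t => (Real.exp_add _ _).symm
  -- upper tail
  have hup : (ℙ {ω | (n : ℝ) * ε / 2 ≤ W ω}).toReal ≤ Real.exp (-(n : ℝ) * ε ^ 2 / 2) := by
    have h1 := measure_ge_le_exp_mul_mgf (μ := ℙ) (X := W) (t := 2 * ε)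
      ((n : ℝ) * ε / 2) (by positivity) (hWint (2 * ε))
    calc (ℙ {ω | (n : ℝ) * ε / 2 ≤ W ω}).toReal
        ≤ Real.exp (-(2 * ε) * ((n : ℝ) * ε / 2)) * mgf W ℙ (2 * ε) := h1
      _ ≤ Real.exp (-(2 * ε) * ((n : ℝ) * ε / 2)) * Real.exp ((n : ℝ) * (2 * ε) ^ 2 / 8) :=
          mul_le_mul_of_nonneg_left (hWmgf _) (Real.exp_pos _).le
      _ = Real.exp (-(n : ℝ) * ε ^ 2 / 2) := by
          rw [← Real.exp_add]; ring_nf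
  -- lower tail
  have hlo : (ℙ {ω | W ω ≤ -((n : ℝ) * ε / 2)}).toReal ≤ Real.exp (-(n : ℝ) * ε ^ 2 / 2) := by
    have h1 := measure_le_le_exp_mul_mgf (μ := ℙ) (X := W) (t := -(2 * ε))
      (-((n : ℝ) * ε / 2)) (by linarith) (hWint (-(2 * ε)))
    calc (ℙ {ω | W ω ≤ -((n : ℝ) * ε / 2)}).toReal
        ≤ Real.exp (-(-(2 * ε)) * -((n : ℝ) * ε / 2)) * mgf W ℙ (-(2 * ε)) := h1
      _ ≤ Real.exp (-(-(2 * ε)) * -((n : ℝ) * ε / 2)) *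
            Real.exp ((n : ℝ) * (-(2 * ε)) ^ 2 / 8) :=
          mul_le_mul_of_nonneg_left (hWmgf _) (Real.exp_pos _).le
      _ = Real.exp (-(n : ℝ) * ε ^ 2 / 2) := by
          rw [← Real.exp_add]; ring_nf
  -- the bad event is contained in the two tails
  have hsub : {ω | ¬ |(1 / (n : ℝ)) * ∑ i, Y i ω - p| ≤ ε / 2} ⊆
      {ω | (n : ℝ) * ε / 2 ≤ W ω} ∪ {ω | W ω ≤ -((n : ℝ) * ε / 2)} := by
    intro ω hω
    simp only [Set.mem_setOf_eq, not_le] at hω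
    have hWω : W ω = ∑ i, Y i ω - (n : ℝ) * p := by
      simp only [hWdef, Finset.sum_apply, hZdef, Function.comp_apply,
        Finset.sum_sub_distrib, Finset.sum_const, Finset.card_univ, Fintype.card_fin,
        nsmul_eq_mul]
    have hrel : (1 / (n : ℝ)) * ∑ i, Y i ω - p = W ω / n := by
      rw [hWω]; field_simp
    rw [hrel, abs_div, abs_of_pos hn0] at hω
    have h2 : (n : ℝ) * ε / 2 < |W ω| := by
      rw [lt_div_iff₀ hn0] at hω; linarith
    rcases abs_cases (W ω) with ⟨heq, _⟩ | ⟨heq, _⟩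
    · left; show (n : ℝ) * ε / 2 ≤ W ω; rw [heq] at h2; linarith
    · right; show W ω ≤ -((n : ℝ) * ε / 2); rw [heq] at h2; linarith
  -- combine
  have hexp_pos : (0 : ℝ) ≤ Real.exp (-(n : ℝ) * ε ^ 2 / 2) := (Real.exp_pos _).le
  calc ℙ {ω | ¬ |(1 / (n : ℝ)) * ∑ i, Y i ω - p| ≤ ε / 2}
      ≤ ℙ ({ω | (n : ℝ) * ε / 2 ≤ W ω} ∪ {ω | W ω ≤ -((n : ℝ) * ε / 2)}) :=
        measure_mono hsub
    _ ≤ ℙ {ω | (n : ℝ) * ε / 2 ≤ W ω} + ℙ {ω | W ω ≤ -((n : ℝ) * ε / 2)} :=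
        measure_union_le _ _
    _ ≤ ENNReal.ofReal (Real.exp (-(n : ℝ) * ε ^ 2 / 2)) +
          ENNReal.ofReal (Real.exp (-(n : ℝ) * ε ^ 2 / 2)) := by
        gcongr
        · exact (ENNReal.le_ofReal_iff_toReal_le (measure_ne_top _ _) hexp_pos).2 hup
        · exact (ENNReal.le_ofReal_iff_toReal_le (measure_ne_top _ _) hexp_pos).2 hlo
    _ = ENNReal.ofReal (2 * Real.exp (-(n : ℝ) * ε ^ 2 / 2)) := by
        rw [← ENNReal.ofReal_add hexp_pos hexp_pos]; ring_nf

/-- For `K` arms, each pulled `n ≥ 1` times with mutually independent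
`{0,1}`-valued rewards of mean `μ j`, any (random) arm `a` maximizing the
empirical means `μ̂ j ω = (1/n) ∑ i, X j i ω` is ε-optimal,
i.e. `(max over j of μ j) - μ (a ω) ≤ ε`, with probability at least
`1 - 2 K exp(-n ε² / 2)`.  (With `n = ⌊T/K⌋` pulls per arm out of a total budget
of `T = n K` samples, this bound equals `1 - 2 K exp(-T ε² / (2K))`.) -/
theorem naive_pac_eps_optimal_whp
    {Ω : Type*} [MeasureSpace Ω] [IsProbabilityMeasure (ℙ : Measure Ω)]
    (K n : ℕ) (hK : 1 ≤ K) (hn : 1 ≤ n)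
    (X : Fin K → Fin n → Ω → ℝ) (μ : Fin K → ℝ)
    (hmeas : ∀ j i, Measurable (X j i))
    (hindep : iIndepFun
      (fun p : Fin K × Fin n => X p.1 p.2) ℙ)
    (hval : ∀ j i ω, X j i ω = 0 ∨ X j i ω = 1)
    (hmean : ∀ j i, ∫ ω, X j i ω ∂ℙ = μ j)
    (a : Ω → Fin K)
    (hmax : ∀ ω, ∀ j : Fin K,
      (1 / (n : ℝ)) * ∑ i, X j i ω ≤ (1 / (n : ℝ)) * ∑ i, X (a ω) i ω)
    (ε : ℝ) (hε : 0 < ε) :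
    1 - ENNReal.ofReal (2 * (K : ℝ) * Real.exp (-(n : ℝ) * ε ^ 2 / 2)) ≤
      ℙ {ω | Finset.univ.sup' ⟨⟨0, hK⟩, Finset.mem_univ _⟩ μ - μ (a ω) ≤ ε} := by
  -- bad events per arm
  set E : Fin K → Set Ω :=
    fun j => {ω | ¬ |(1 / (n : ℝ)) * ∑ i, X j i ω - μ j| ≤ ε / 2} with hEdef
  have hEj : ∀ j, ℙ (E j) ≤ ENNReal.ofReal (2 * Real.exp (-(n : ℝ) * ε ^ 2 / 2)) := by
    intro j
    have hinj : Function.Injective (fun i : Fin n => ((j, i) : Fin K × Fin n)) := by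
      intro i i' h
      simpa using congrArg Prod.snd h
    have hindep_j : iIndepFun (fun i => X j i) ℙ :=
      iIndepFun_precomp_inj hindep hinj
    exact arm_tail_bound n hn (X j) (μ j) (hmeas j) hindep_j (hval j)
      (fun i => hmean j i) ε hε
  -- union bound
  have hunion : ℙ (⋃ j, E j) ≤
      ENNReal.ofReal (2 * (K : ℝ) * Real.exp (-(n : ℝ) * ε ^ 2 / 2)) := by
    calc ℙ (⋃ j, E j) ≤ ∑' j, ℙ (E j) := measure_iUnion_le E
      _ = ∑ j, ℙ (E j) := tsum_fintype _
      _ ≤ ∑ _j : Fin K, ENNReal.ofReal (2 * Real.exp (-(n : ℝ) * ε ^ 2 / 2)) :=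
          Finset.sum_le_sum fun j _ => hEj j
      _ = (K : ENNReal) * ENNReal.ofReal (2 * Real.exp (-(n : ℝ) * ε ^ 2 / 2)) := by
          simp [mul_comm]
      _ = ENNReal.ofReal (2 * (K : ℝ) * Real.exp (-(n : ℝ) * ε ^ 2 / 2)) := by
          rw [← ENNReal.ofReal_natCast K, ← ENNReal.ofReal_mul (by positivity)]
          congr 1
          ring
  -- good event is contained in the target
  have hgood : (⋃ j, E j)ᶜ ⊆
      {ω | Finset.univ.sup' ⟨⟨0, hK⟩, Finset.mem_univ _⟩ μ - μ (a ω) ≤ ε} := by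
    intro ω hω
    rw [Set.compl_iUnion, Set.mem_iInter] at hω
    have hacc : ∀ j, |(1 / (n : ℝ)) * ∑ i, X j i ω - μ j| ≤ ε / 2 := by
      intro j
      have := hω j
      rw [Set.mem_compl_iff, hEdef] at this
      simpa using this
    obtain ⟨j0, _, hj0⟩ := Finset.exists_mem_eq_sup'
      (⟨⟨0, hK⟩, Finset.mem_univ _⟩ : Finset.univ.Nonempty) μ
    show Finset.univ.sup' _ μ - μ (a ω) ≤ ε
    rw [hj0]
    have h1 := abs_le.1 (hacc j0)
    have h2 := abs_le.1 (hacc (a ω))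
    have h3 := hmax ω j0
    linarith [h1.1, h1.2, h2.1, h2.2]
  -- conclude
  calc 1 - ENNReal.ofReal (2 * (K : ℝ) * Real.exp (-(n : ℝ) * ε ^ 2 / 2))
      ≤ 1 - ℙ (⋃ j, E j) := tsub_le_tsub_left hunion 1
    _ ≤ ℙ ((⋃ j, E j)ᶜ) := by
        rw [tsub_le_iff_right]
        calc (1 : ENNReal) = ℙ (Set.univ : Set Ω) := (measure_univ).symm
          _ = ℙ ((⋃ j, E j)ᶜ ∪ ⋃ j, E j) := by rw [Set.compl_union_self]
          _ ≤ ℙ ((⋃ j, E j)ᶜ) + ℙ (⋃ j, E j) := measure_union_le _ _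
    _ ≤ ℙ {ω | Finset.univ.sup' ⟨⟨0, hK⟩, Finset.mem_univ _⟩ μ - μ (a ω) ≤ ε} :=
        measure_mono hgood
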